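/- The downlink weighted sum MSE of the transformed precoder/decoder pair equals the interference-channel weighted sum MSE, ξ^{DL}(B̃, W̃) = ξ^I, if and only if β²·Σ_{s=1}^S t_s^H (Ψ + μ_s I_N) t_s = tr(η V^H R V). (This is the reverse WSMSE transfer condition (21).) -/

import Mathlib

open Matrix Finset

/-- **Reverse WSMSE transfer condition (21).**  With the transformed downlink precoder
and decoder `B̃ = β T`, `W̃ = V / β`, the downlink weighted sum MSE of the transformed
pair equals the interference-channel weighted sum MSE, `ξᴰᴸ(B̃, W̃) = ξᴵ`, if and only if
`β² ∑_s t_sᴴ (Ψ + μ_s I_N) t_s = tr(η Vᴴ R V)`. -/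
theorem reverse_WSMSE_transfer_condition
    (N M S : ℕ) (hN : 1 ≤ N) (hM : 1 ≤ M) (hS : 1 ≤ S)
    (H : Matrix (Fin N) (Fin M) ℂ) (V : Matrix (Fin M) (Fin S) ℂ)
    (T : Matrix (Fin N) (Fin S) ℂ) (R : Matrix (Fin M) (Fin M) ℂ)
    (η : Fin S → ℝ) (ψ : Fin N → ℝ) (μ : Fin S → ℝ)
    (βb : ℝ) (hβ : βb ≠ 0)
    (ηm : Matrix (Fin S) (Fin S) ℂ) (hηm : ηm = Matrix.diagonal fun s => (η s : ℂ))
    (Γ : Matrix (Fin N) (Fin N) ℂ) (hΓ : Γ = H * V * ηm * Vᴴ * Hᴴ)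
    (Δ : Fin S → Matrix (Fin N) (Fin N) ℂ)
    (hΔ : ∀ s, Δ s = (Matrix.diagonal fun i => (ψ i : ℂ)) + (μ s : ℂ) • 1)
    (Bt : Matrix (Fin N) (Fin S) ℂ) (hBt : Bt = (βb : ℂ) • T)
    (Wt : Matrix (Fin M) (Fin S) ℂ) (hWt : Wt = (βb : ℂ)⁻¹ • V)
    (ξI ξDL : ℂ)
    (hξI : ξI = Matrix.trace (Tᴴ * Γ * T - Tᴴ * H * V * ηm - ηm * Vᴴ * Hᴴ * T + ηm)
        + ∑ s, (star fun i => T i s) ⬝ᵥ ((Δ s) *ᵥ fun i => T i s))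
    (hξDL : ξDL = Matrix.trace (ηm + ηm * Wtᴴ * Hᴴ * Bt * Btᴴ * H * Wt
        + ηm * Wtᴴ * R * Wt - ηm * Wtᴴ * Hᴴ * Bt - ηm * Btᴴ * H * Wt)) :
    ξDL = ξI ↔
      (βb : ℂ) ^ 2 * ∑ s, (star fun i => T i s) ⬝ᵥ ((Δ s) *ᵥ fun i => T i s)
        = Matrix.trace (ηm * Vᴴ * R * V) := by
  have hβc : (βb : ℂ) ≠ 0 := Complex.ofReal_ne_zero.mpr hβ
  have hstar : star ((βb : ℂ)) = (βb : ℂ) := by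
    simp [Complex.star_def, Complex.conj_ofReal]
  set Ssum : ℂ := ∑ s, (star fun i => T i s) ⬝ᵥ ((Δ s) *ᵥ fun i => T i s) with hSsum
  have key : ξDL = Matrix.trace (Tᴴ * Γ * T - Tᴴ * H * V * ηm - ηm * Vᴴ * Hᴴ * T + ηm)
      + ((βb : ℂ))⁻¹ ^ 2 * Matrix.trace (ηm * Vᴴ * R * V) := by
    subst hξDL hBt hWt hΓ
    simp only [conjTranspose_smul, Matrix.smul_mul, Matrix.mul_smul, smul_smul,
      trace_add, trace_sub, trace_smul, hstar, star_inv₀]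
    have e1 : Matrix.trace (ηm * Vᴴ * Hᴴ * T * Tᴴ * H * V)
        = Matrix.trace (Tᴴ * (H * V * ηm * Vᴴ * Hᴴ) * T) := by
      rw [show ηm * Vᴴ * Hᴴ * T * Tᴴ * H * V = (ηm * Vᴴ * Hᴴ * T) * (Tᴴ * H * V) by
        simp only [Matrix.mul_assoc], trace_mul_comm]
      congr 1
      simp only [Matrix.mul_assoc]
    have e2 : Matrix.trace (ηm * Tᴴ * H * V) = Matrix.trace (Tᴴ * H * V * ηm) := by
      rw [show ηm * Tᴴ * H * V = ηm * (Tᴴ * H * V) by simp only [Matrix.mul_assoc],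
        trace_mul_comm]
    rw [e1] at *
    field_simp
    ring_nf
    rw [e2]
    have hb2 : (βb : ℂ) ^ 2 * ((βb : ℂ))⁻¹ ^ 2 = 1 := by
      rw [← mul_pow, mul_inv_cancel₀ hβc, one_pow]
    linear_combination (Matrix.trace (ηm * Vᴴ * R * V)) * hb2
  have keyI : ξI = Matrix.trace (Tᴴ * Γ * T - Tᴴ * H * V * ηm - ηm * Vᴴ * Hᴴ * T + ηm) + Ssum := hξI
  rw [key, keyI]
  constructor
  · intro h
    have h2 : ((βb : ℂ))⁻¹ ^ 2 * Matrix.trace (ηm * Vᴴ * R * V) = Ssum := by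
      linear_combination h
    field_simp at h2
    linear_combination -h2
  · intro h
    have h2 : Ssum = ((βb : ℂ))⁻¹ ^ 2 * Matrix.trace (ηm * Vᴴ * R * V) := by
      field_simp
      linear_combination h
    rw [h2]
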